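/- For ℓ > 0 and s ∈ [−X(ℓ), X(ℓ)] define ι_ℓ(s) = arsinh(sinh(ℓ/2)/cos(ℓ·s/(2π))). Then ρ_ℓ(s) = (ℓ/(2π·sinh(ℓ/2)))·sinh(ι_ℓ(s)) for every ℓ > 0 and s ∈ [−X(ℓ), X(ℓ)], and if moreover 0 < ℓ < 2·arsinh(1), then ρ_ℓ(s) ≤ ι_ℓ(s) ≤ π·ρ_ℓ(s) for every s ∈ [−X(ℓ), X(ℓ)]. -/

import Mathlib

/-- Half-length of the hyperbolic collar around a geodesic of length `ℓ`. -/
noncomputable def collarX (ℓ : ℝ) : ℝ :=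
  2 * Real.pi / ℓ * (Real.pi / 2 - Real.arctan (Real.sinh (ℓ / 2)))

/-- Conformal factor of the hyperbolic collar. -/
noncomputable def collarRho (ℓ s : ℝ) : ℝ :=
  ℓ / (2 * Real.pi * Real.cos (ℓ * s / (2 * Real.pi)))

/-- Injectivity radius of the hyperbolic collar at coordinate `s`. -/
noncomputable def collarIota (ℓ s : ℝ) : ℝ :=
  Real.arsinh (Real.sinh (ℓ / 2) / Real.cos (ℓ * s / (2 * Real.pi)))

/-- `sinh x ≤ x * cosh x` for `x ≥ 0`. -/
lemma my_sinh_le_mul_cosh {x : ℝ} (hx : 0 ≤ x) : Real.sinh x ≤ x * Real.cosh x := by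
  have key : MonotoneOn (fun z : ℝ => z * Real.cosh z - Real.sinh z) (Set.Ici 0) := by
    apply monotoneOn_of_deriv_nonneg (convex_Ici 0)
    · fun_prop
    · intro y hy
      exact (((hasDerivAt_id y).mul (Real.hasDerivAt_cosh y)).sub
        (Real.hasDerivAt_sinh y)).differentiableAt.differentiableWithinAt
    · intro y hy
      rw [interior_Ici] at hy
      have hd : HasDerivAt (fun z : ℝ => z * Real.cosh z - Real.sinh z)
          (1 * Real.cosh y + y * Real.sinh y - Real.cosh y) y :=
        ((hasDerivAt_id y).mul (Real.hasDerivAt_cosh y)).sub (Real.hasDerivAt_sinh y)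
      rw [hd.deriv]
      have h1 := Real.sinh_pos_iff.2 hy
      have h2 : (0:ℝ) < y := hy
      nlinarith [mul_pos h2 h1]
  have := key Set.self_mem_Ici hx hx
  simp at this
  linarith

/-- Tangent-line inequality for `sinh`. -/
lemma my_sinh_tangent {t v : ℝ} (ht : 0 ≤ t) (htv : t ≤ v) :
    Real.sinh t + (v - t) * Real.cosh t ≤ Real.sinh v := by
  have h : Real.sinh v = Real.sinh t * Real.cosh (v - t) + Real.cosh t * Real.sinh (v - t) := by
    rw [← Real.sinh_add]; ring_nf
  have h1 : (1:ℝ) ≤ Real.cosh (v - t) := Real.one_le_cosh _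
  have h2 : v - t ≤ Real.sinh (v - t) := Real.self_le_sinh_iff.2 (by linarith)
  have h3 : 0 ≤ Real.sinh t := Real.sinh_nonneg_iff.2 ht
  have h4 : 0 < Real.cosh t := Real.cosh_pos t
  nlinarith

/-- Lower bound on the cosine factor on the collar. -/
lemma my_cos_bound {ℓ s : ℝ} (hℓ : 0 < ℓ)
    (hs : s ∈ Set.Icc (-(collarX ℓ)) (collarX ℓ)) :
    Real.tanh (ℓ / 2) ≤ Real.cos (ℓ * s / (2 * Real.pi)) := by
  have hπ := Real.pi_pos
  set t : ℝ := ℓ / 2 with htdef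
  set A : ℝ := Real.pi / 2 - Real.arctan (Real.sinh t) with hAdef
  have hA0 : 0 ≤ A := by
    have := Real.arctan_lt_pi_div_two (Real.sinh t); simp [hAdef]; linarith
  have hAπ : A ≤ Real.pi := by
    have := Real.neg_pi_div_two_lt_arctan (Real.sinh t); simp [hAdef]; linarith
  have hX : ℓ * collarX ℓ / (2 * Real.pi) = A := by
    simp only [collarX, hAdef, htdef]
    field_simp
  have habs : |ℓ * s / (2 * Real.pi)| ≤ A := by
    rw [abs_le]
    constructor
    · rw [← hX]
      have h2 : -s ≤ collarX ℓ := by have := hs.1; linarith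
      rw [neg_le, ← neg_div]
      calc -(ℓ * s) / (2 * Real.pi) = ℓ * (-s) / (2 * Real.pi) := by ring
        _ ≤ ℓ * collarX ℓ / (2 * Real.pi) := by gcongr
    · rw [← hX]
      gcongr
      exact hs.2
  have hcos : Real.cos A ≤ Real.cos (ℓ * s / (2 * Real.pi)) := by
    rw [← Real.cos_abs (ℓ * s / (2 * Real.pi))]
    exact Real.cos_le_cos_of_nonneg_of_le_pi (abs_nonneg _) hAπ habs
  have hcosA : Real.cos A = Real.tanh t := by
    rw [hAdef, Real.cos_pi_div_two_sub, Real.sin_arctan]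
    rw [Real.tanh_eq_sinh_div_cosh]
    congr 1
    rw [← Real.cosh_sq']
    exact Real.sqrt_sq (Real.cosh_pos t).le
  linarith [hcosA ▸ hcos]

set_option maxHeartbeats 1000000 in
theorem collarRho_inj_comparable :
    (∀ ℓ : ℝ, 0 < ℓ → ∀ s ∈ Set.Icc (-(collarX ℓ)) (collarX ℓ),
      collarRho ℓ s = ℓ / (2 * Real.pi * Real.sinh (ℓ / 2)) * Real.sinh (collarIota ℓ s)) ∧
    (∀ ℓ : ℝ, 0 < ℓ → ℓ < 2 * Real.arsinh 1 →
      ∀ s ∈ Set.Icc (-(collarX ℓ)) (collarX ℓ),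
        collarRho ℓ s ≤ collarIota ℓ s ∧ collarIota ℓ s ≤ Real.pi * collarRho ℓ s) := by
  have hπ := Real.pi_pos
  have hπ3 := Real.pi_gt_three
  constructor
  · intro ℓ hℓ s hs
    have hc := my_cos_bound hℓ hs
    set t : ℝ := ℓ / 2 with htdef
    set c : ℝ := Real.cos (ℓ * s / (2 * Real.pi)) with hcdef
    have hts : 0 < Real.sinh t := Real.sinh_pos_iff.2 (by positivity)
    have htc : Real.tanh t * Real.cosh t = Real.sinh t := by
      rw [Real.tanh_eq_sinh_div_cosh]
      field_simp
    have htanh : 0 < Real.tanh t := by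
      rw [Real.tanh_eq_sinh_div_cosh]
      positivity
    have hc0 : 0 < c := lt_of_lt_of_le htanh hc
    simp only [collarRho, collarIota, ← htdef, ← hcdef, Real.sinh_arsinh]
    field_simp
  · intro ℓ hℓ hℓ2 s hs
    have hc := my_cos_bound hℓ hs
    set t : ℝ := ℓ / 2 with htdef
    set c : ℝ := Real.cos (ℓ * s / (2 * Real.pi)) with hcdef
    have ht0 : 0 < t := by positivity
    have hts : 0 < Real.sinh t := Real.sinh_pos_iff.2 ht0
    have htc : Real.tanh t * Real.cosh t = Real.sinh t := by
      rw [Real.tanh_eq_sinh_div_cosh]; field_simp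
    have htanh : 0 < Real.tanh t := by
      rw [Real.tanh_eq_sinh_div_cosh]; positivity
    have hc0 : 0 < c := lt_of_lt_of_le htanh hc
    have hc1 : c ≤ 1 := Real.cos_le_one _
    have hcoshpos := Real.cosh_pos t
    -- sinh t < 1, cosh t < 3/2
    have hs1 : Real.sinh t < 1 := by
      have : t < Real.arsinh 1 := by rw [htdef]; linarith
      calc Real.sinh t < Real.sinh (Real.arsinh 1) := Real.sinh_lt_sinh.2 this
        _ = 1 := Real.sinh_arsinh 1
    have hcosh32 : Real.cosh t < 3 / 2 := by
      have h := Real.cosh_sq t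
      nlinarith
    -- t ≤ c * cosh t  (since sinh t ≤ c * cosh t and t ≤ sinh t)
    have htle : t ≤ c * Real.cosh t := by
      have h1 : t ≤ Real.sinh t := Real.self_le_sinh_iff.2 ht0.le
      nlinarith [mul_le_mul_of_nonneg_right hc hcoshpos.le]
    -- rho and pi * rho
    have hrho : collarRho ℓ s = t / (Real.pi * c) := by
      simp only [collarRho, ← hcdef, htdef]
      rw [div_eq_div_iff (by positivity) (by positivity)]
      ring
    set u : ℝ := t / (Real.pi * c) with hudef
    have hpirho : Real.pi * collarRho ℓ s = t / c := by
      rw [hrho, hudef]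
      rw [eq_div_iff hc0.ne']
      field_simp
    have hu0 : 0 < u := by positivity
    have huc : u * c = t / Real.pi := by rw [hudef]; field_simp
    have hu12 : u ≤ 1 / 2 := by
      rw [hudef, div_le_iff₀ (by positivity)]
      nlinarith
    constructor
    · -- rho ≤ iota
      rw [hrho, collarIota, ← htdef, ← hcdef, ← Real.arsinh_sinh u,
        Real.arsinh_le_arsinh]
      rw [le_div_iff₀ hc0]
      have h1 : Real.sinh u ≤ u * Real.cosh u := my_sinh_le_mul_cosh hu0.le
      have h2 : Real.cosh u ≤ Real.cosh (1 / 2) := by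
        rw [Real.cosh_le_cosh]
        rw [abs_of_nonneg hu0.le, abs_of_nonneg (by norm_num : (0:ℝ) ≤ 1/2)]
        exact hu12
      have h3 : Real.cosh (1 / 2) < 2 := by
        rw [Real.cosh_eq]
        have he1 : Real.exp (1/2) < 2 := by
          have hsq : Real.exp (1/2) * Real.exp (1/2) = Real.exp 1 := by
            rw [← Real.exp_add]; norm_num
          nlinarith [Real.exp_one_lt_d9, Real.exp_pos (1/2 : ℝ)]
        have he2 : Real.exp (-(1/2) : ℝ) ≤ 1 := Real.exp_le_one_iff.2 (by norm_num)
        linarith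
      have h4 : t ≤ Real.sinh t := Real.self_le_sinh_iff.2 ht0.le
      have h5 : Real.sinh u * c ≤ (u * c) * Real.cosh u :=
        by nlinarith [mul_le_mul_of_nonneg_right h1 hc0.le]
      rw [huc] at h5
      have h6 : t / Real.pi * Real.cosh u ≤ t / Real.pi * Real.pi := by
        have h : Real.cosh u ≤ Real.pi := by linarith
        exact mul_le_mul_of_nonneg_left h (by positivity)
      have h7 : t / Real.pi * Real.pi = t := by field_simp
      linarith
    · -- iota ≤ pi * rho
      rw [hpirho, collarIota, ← htdef, ← hcdef, ← Real.arsinh_sinh (t / c),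
        Real.arsinh_le_arsinh]
      set v : ℝ := t / c with hvdef
      have hcv : c * v = t := by rw [hvdef]; field_simp
      have htv : t ≤ v := by
        rw [hvdef, le_div_iff₀ hc0]
        nlinarith
      have h1 := my_sinh_tangent ht0.le htv
      have h2 : Real.sinh t ≤ t * Real.cosh t := my_sinh_le_mul_cosh ht0.le
      rw [div_le_iff₀ hc0]
      nlinarith [mul_le_mul_of_nonneg_left h1 hc0.le,
        mul_nonneg (by linarith : (0:ℝ) ≤ 1 - c) (by linarith : 0 ≤ t * Real.cosh t - Real.sinh t)]
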